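/- arXiv:1810.03491 — 6 statements merged into one kernel-verified Lean document; each statement's English description precedes it below -/
import Mathlib

section
/- Let G = (V, E) be a directed graph on a finite vertex set and S ⊆ V. For every cross edge (u, v) ∈ E (i.e., part(u) ≠ part(v)), we have part(u) ≺* part(v): either |A_S(u)| < |A_S(v)|, or |A_S(u)| = |A_S(v)| and |D_S(u)| > |D_S(v)|. -/
/-- For every cross edge `(u, v)` (i.e. `part(u) ≠ part(v)`), we have
`part(u) ≺* part(v)`: either `|A_S(u)| < |A_S(v)|`, or `|A_S(u)| = |A_S(v)|` and
`|D_S(u)| > |D_S(v)|`. -/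
theorem cross_edge_part_lt
    {V : Type*} [Fintype V] (E : V → V → Prop) (S : Set V) (u v : V)
    (hedge : E u v)
    (hcross :
      (({x | Relation.ReflTransGen E x u} ∩ S).ncard,
        ({y | Relation.ReflTransGen E u y} ∩ S).ncard) ≠
      (({x | Relation.ReflTransGen E x v} ∩ S).ncard,
        ({y | Relation.ReflTransGen E v y} ∩ S).ncard)) :
    ({x | Relation.ReflTransGen E x u} ∩ S).ncard <
      ({x | Relation.ReflTransGen E x v} ∩ S).ncard ∨
    (({x | Relation.ReflTransGen E x u} ∩ S).ncard =
        ({x | Relation.ReflTransGen E x v} ∩ S).ncard ∧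
      ({y | Relation.ReflTransGen E v y} ∩ S).ncard <
        ({y | Relation.ReflTransGen E u y} ∩ S).ncard) := by
  have hA : ({x | Relation.ReflTransGen E x u} ∩ S) ⊆
      ({x | Relation.ReflTransGen E x v} ∩ S) := fun x hx =>
    ⟨hx.1.tail hedge, hx.2⟩
  have hD : ({y | Relation.ReflTransGen E v y} ∩ S) ⊆
      ({y | Relation.ReflTransGen E u y} ∩ S) := fun y hy =>
    ⟨hy.1.head hedge, hy.2⟩
  have hAle := Set.ncard_le_ncard hA (Set.toFinite _)
  have hDle := Set.ncard_le_ncard hD (Set.toFinite _)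
  rcases lt_or_eq_of_le hAle with h | h
  · exact Or.inl h
  · rcases lt_or_eq_of_le hDle with h2 | h2
    · exact Or.inr ⟨h, h2⟩
    · exact absurd (Prod.ext h h2.symm) hcross
end

section
/- Let G = (V, E) be a directed graph on a finite vertex set with |V| = n ≥ 2, let τ ≥ 1 be an integer with (ln n)/τ ≤ 1, and let u, v ∈ V be such that there is a directed path from u to v but the ordered pair (u, v) is NOT τ-related (i.e., |A(v) \ A(u)| > τ or |D(u) \ D(v)| > τ). Let S be a random subset of V in which each node is included independently with probability (ln n)/τ. Then the probability that |A_S(u)| = |A_S(v)| and |D_S(u)| = |D_S(v)| (i.e., that u and v fall in the same part V_{i,j}) is at most 1/n. -/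
open MeasureTheory
open scoped ENNReal Classical

/-- Let `|V| = n ≥ 2`, `τ ≥ 1` with `(ln n)/τ ≤ 1`, and suppose there is a
directed path from `u` to `v` but the ordered pair `(u, v)` is NOT τ-related, i.e.
`|A(v) \ A(u)| > τ` or `|D(u) \ D(v)| > τ`. If `S` is a random subset of `V` including
each node independently with probability `(ln n)/τ`, then the probability that
`|A_S(u)| = |A_S(v)|` and `|D_S(u)| = |D_S(v)|` (i.e. that `u` and `v` fall in the same
part `V_{i,j}`) is at most `1/n`. -/
theorem prob_same_part_of_not_related_le
    {V : Type} [Fintype V] (E : V → V → Prop) (n τ : ℕ) (hn : Fintype.card V = n)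
    (h2 : 2 ≤ n) (hτ : 1 ≤ τ) (hp : Real.log n / τ ≤ 1) (u v : V)
    (hpath : Relation.ReflTransGen E u v)
    (hnotrel :
      τ < ({x | Relation.ReflTransGen E x v} \ {x | Relation.ReflTransGen E x u}).ncard ∨
      τ < ({y | Relation.ReflTransGen E u y} \ {y | Relation.ReflTransGen E v y}).ncard) :
    (Measure.pi fun _ : V =>
        (PMF.bernoulli (Real.toNNReal (Real.log n / τ))
          (Real.toNNReal_le_one.mpr hp)).toMeasure)
      {ω : V → Bool |
        ({x | Relation.ReflTransGen E x u} ∩ {x | ω x = true}).ncard =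
          ({x | Relation.ReflTransGen E x v} ∩ {x | ω x = true}).ncard ∧
        ({y | Relation.ReflTransGen E u y} ∩ {x | ω x = true}).ncard =
          ({y | Relation.ReflTransGen E v y} ∩ {x | ω x = true}).ncard} ≤ 1 / n := by
  set p : ℝ := Real.log n / τ with hpdef
  have hn1 : (1:ℝ) ≤ n := by exact_mod_cast h2.trans' (by norm_num)
  have hτ0 : (0:ℝ) < τ := by exact_mod_cast hτ
  have hp0 : 0 ≤ p := div_nonneg (Real.log_nonneg hn1) hτ0.le
  set p' : ℝ≥0∞ := ENNReal.ofReal p with hp'def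
  set μ := (Measure.pi fun _ : V =>
        (PMF.bernoulli (Real.toNNReal p) (Real.toNNReal_le_one.mpr hp)).toMeasure) with hμ
  -- find a large set W that S must miss
  obtain ⟨W, hWτ, hWsub⟩ : ∃ W : Set V, τ < W.ncard ∧
      {ω : V → Bool |
        ({x | Relation.ReflTransGen E x u} ∩ {x | ω x = true}).ncard =
          ({x | Relation.ReflTransGen E x v} ∩ {x | ω x = true}).ncard ∧
        ({y | Relation.ReflTransGen E u y} ∩ {x | ω x = true}).ncard =
          ({y | Relation.ReflTransGen E v y} ∩ {x | ω x = true}).ncard}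
      ⊆ {ω | ∀ x ∈ W, ω x = false} := by
    rcases hnotrel with h | h
    · refine ⟨_, h, ?_⟩
      rintro ω ⟨h1, -⟩ x ⟨hxv, hxu⟩
      by_contra hωx
      have hx : ω x = true := by simpa using hωx
      have hsub : {x | Relation.ReflTransGen E x u} ∩ {x | ω x = true} ⊆
          {x | Relation.ReflTransGen E x v} ∩ {x | ω x = true} := by
        rintro y ⟨hy, hys⟩; exact ⟨hy.trans hpath, hys⟩
      have heq := Set.eq_of_subset_of_ncard_le hsub h1.ge (Set.toFinite _)
      have hmem : x ∈ {x | Relation.ReflTransGen E x v} ∩ {x | ω x = true} := ⟨hxv, hx⟩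
      rw [← heq] at hmem
      exact hxu hmem.1
    · refine ⟨_, h, ?_⟩
      rintro ω ⟨-, h1⟩ x ⟨hxu, hxv⟩
      by_contra hωx
      have hx : ω x = true := by simpa using hωx
      have hsub : {y | Relation.ReflTransGen E v y} ∩ {x | ω x = true} ⊆
          {y | Relation.ReflTransGen E u y} ∩ {x | ω x = true} := by
        rintro y ⟨hy, hys⟩; exact ⟨hpath.trans hy, hys⟩
      have heq := Set.eq_of_subset_of_ncard_le hsub h1.le (Set.toFinite _)
      have hmem : x ∈ {y | Relation.ReflTransGen E u y} ∩ {x | ω x = true} := ⟨hxu, hx⟩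
      rw [← heq] at hmem
      exact hxv hmem.1
  -- compute measure of the cylinder
  have hcyl : {ω : V → Bool | ∀ x ∈ W, ω x = false} =
      Set.univ.pi (fun i => if i ∈ W then ({false} : Set Bool) else Set.univ) := by
    ext ω
    simp only [Set.mem_setOf_eq, Set.mem_pi, Set.mem_univ, true_implies]
    constructor
    · intro h i
      by_cases hi : i ∈ W
      · simp [hi, h i hi]
      · simp [hi]
    · intro h i hi
      have := h i; simp [hi] at this; exact this
  have hfalse : (PMF.bernoulli (Real.toNNReal p) (Real.toNNReal_le_one.mpr hp)).toMeasure {false} = 1 - p' := by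
    rw [PMF.toMeasure_apply_singleton _ _ (measurableSet_singleton _), PMF.bernoulli_apply]
    rfl
  have hmeas : μ {ω : V → Bool | ∀ x ∈ W, ω x = false} = (1 - p') ^ W.toFinset.card := by
    rw [hcyl, hμ, Measure.pi_pi]
    have : ∀ i : V, (PMF.bernoulli (Real.toNNReal p) (Real.toNNReal_le_one.mpr hp)).toMeasure
        (if i ∈ W then ({false} : Set Bool) else Set.univ)
        = if i ∈ W.toFinset then (1 - p') else 1 := by
      intro i
      by_cases hi : i ∈ W
      · simpa [hi] using hfalse
      · simp only [hi, if_false, Set.mem_toFinset]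
        exact measure_univ
    rw [Finset.prod_congr rfl (fun i _ => this i), Fintype.prod_ite_mem, Finset.prod_const]
  -- bound
  have hτcard : τ ≤ W.toFinset.card := by
    rw [← Set.ncard_eq_toFinset_card'] ; exact hWτ.le
  have hle1 : (1 - p') ≤ 1 := tsub_le_self
  have key : (1 - p') ^ τ ≤ 1 / n := by
    have h1p : 1 - p' = ENNReal.ofReal (1 - p) := by
      rw [ENNReal.ofReal_sub _ hp0, ENNReal.ofReal_one]
    have hn0 : (0:ℝ) < n := by exact_mod_cast Nat.lt_of_lt_of_le Nat.zero_lt_two h2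
    have hinv : ((n:ℝ≥0∞))⁻¹ = ENNReal.ofReal ((n:ℝ)⁻¹) := by
      rw [ENNReal.ofReal_inv_of_pos hn0, ENNReal.ofReal_natCast]
    rw [h1p, ← ENNReal.ofReal_pow (by linarith), one_div, hinv]
    apply ENNReal.ofReal_le_ofReal
    calc (1 - p) ^ τ ≤ Real.exp (-p) ^ τ :=
          pow_le_pow_left₀ (by linarith) (by linarith [Real.add_one_le_exp (-p)]) τ
      _ = Real.exp (τ * (-p)) := (Real.exp_nat_mul _ τ).symm
      _ = (n:ℝ)⁻¹ := by
          have hτp : (τ:ℝ) * (-p) = -Real.log n := by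
            rw [hpdef]; field_simp
          rw [hτp, Real.exp_neg, Real.exp_log hn0]
  calc μ _ ≤ μ {ω : V → Bool | ∀ x ∈ W, ω x = false} := measure_mono hWsub
    _ = (1 - p') ^ W.toFinset.card := hmeas
    _ ≤ (1 - p') ^ τ := pow_le_pow_right_of_le_one' hle1 hτcard
    _ ≤ 1 / n := key
end

section
/- Let G = (V, E) be a directed graph on a finite vertex set, k : V → ℕ an injective function, and u, v ∈ V. Let F_a, F_d, B_d ⊆ V be pairwise disjoint sets satisfying: (i) for every edge (x, y) ∈ E with x ∈ F_d, y ∈ F_a ∪ F_d; (ii) every node of B_d has a directed path to u; (iii) for all nodes x, y each having a directed path to u, if x ∈ B_d and k(x) < k(y) then y ∈ B_d; (iv) v ∈ F_a ∪ F_d and u ∉ F_a ∪ F_d; (v) B_d ≠ ∅ and every x ∈ F_a satisfies k(x) > min{k(y) : y ∈ B_d}. Then there is no directed path from v to u in G. -/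
/-- justification of terminating condition (C5): Let `k : V → ℕ` be
injective and let `F_a, F_d, B_d ⊆ V` be pairwise disjoint sets satisfying:
(i) for every edge `(x, y)` with `x ∈ F_d`, `y ∈ F_a ∪ F_d`;
(ii) every node of `B_d` has a directed path to `u`;
(iii) for all nodes `x, y` each having a directed path to `u`, if `x ∈ B_d` and
`k(x) < k(y)` then `y ∈ B_d`;
(iv) `v ∈ F_a ∪ F_d` and `u ∉ F_a ∪ F_d`;
(v) `B_d ≠ ∅` and every `x ∈ F_a` satisfies `k(x) > min {k(y) : y ∈ B_d}`.
Then there is no directed path from `v` to `u`. -/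
theorem no_path_of_min_backward_dead_lt_forward_alive
    {V : Type*} [Fintype V] (E : V → V → Prop) (k : V → ℕ)
    (hk : Function.Injective k) (u v : V) (Fa Fd Bd : Set V)
    (hd1 : Disjoint Fa Fd) (hd2 : Disjoint Fa Bd) (hd3 : Disjoint Fd Bd)
    (hi : ∀ x y, E x y → x ∈ Fd → y ∈ Fa ∪ Fd)
    (hii : ∀ y ∈ Bd, Relation.ReflTransGen E y u)
    (hiii : ∀ x y, Relation.ReflTransGen E x u → Relation.ReflTransGen E y u →
      x ∈ Bd → k x < k y → y ∈ Bd)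
    (hv : v ∈ Fa ∪ Fd) (hu : u ∉ Fa ∪ Fd)
    (hBd : Bd.Nonempty)
    (hmin : ∀ x ∈ Fa, sInf (k '' Bd) < k x) :
    ¬ Relation.ReflTransGen E v u := by
  -- obtain a minimizer m ∈ Bd with k m = sInf (k '' Bd)
  obtain ⟨m, hmBd, hmk⟩ := Nat.sInf_mem (hBd.image k)
  intro hpath
  -- main claim: no node of Fa ∪ Fd with a path to u exists
  suffices H : ∀ w, Relation.ReflTransGen E w u → w ∈ Fa ∪ Fd → False from
    H v hpath hv
  intro w hw
  induction hw using Relation.ReflTransGen.head_induction_on with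
  | refl => exact fun h => hu h
  | head hxy hyu ih =>
    rename_i x y
    intro hx
    cases hx with
    | inl hxFa =>
      -- x ∈ Fa, x has path to u, k m < k x, so x ∈ Bd: contradiction
      have hxu : Relation.ReflTransGen E x u := Relation.ReflTransGen.head hxy hyu
      have : x ∈ Bd := hiii m x (hii m hmBd) hxu hmBd (hmk ▸ hmin x hxFa)
      exact (hd2.ne_of_mem hxFa this) rfl
    | inr hxFd =>
      exact ih (hi x y hxy hxFd)
end

section
/- Let G = (V, E) be a directed graph on a finite vertex set, k : V → ℕ an injective function, and u, v ∈ V. Let B_a, B_d, F_d ⊆ V be pairwise disjoint sets satisfying: (i) for every edge (x, y) ∈ E with y ∈ B_d, x ∈ B_a ∪ B_d; (ii) every node of F_d is reachable from v by a directed path; (iii) for all nodes x, y each reachable from v, if y ∈ F_d and k(x) < k(y) then x ∈ F_d; (iv) u ∈ B_a ∪ B_d and v ∉ B_a ∪ B_d; (v) F_d ≠ ∅ and every y ∈ B_a satisfies k(y) < max{k(x) : x ∈ F_d}. Then there is no directed path from v to u in G. -/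
/-- justification of terminating condition (C6): Let `k : V → ℕ` be
injective and let `B_a, B_d, F_d ⊆ V` be pairwise disjoint sets satisfying:
(i) for every edge `(x, y)` with `y ∈ B_d`, `x ∈ B_a ∪ B_d`;
(ii) every node of `F_d` is reachable from `v` by a directed path;
(iii) for all nodes `x, y` each reachable from `v`, if `y ∈ F_d` and `k(x) < k(y)` then
`x ∈ F_d`;
(iv) `u ∈ B_a ∪ B_d` and `v ∉ B_a ∪ B_d`;
(v) `F_d ≠ ∅` and every `y ∈ B_a` satisfies `k(y) < max {k(x) : x ∈ F_d}`.
Then there is no directed path from `v` to `u`. -/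
theorem no_path_of_max_forward_dead_gt_backward_alive
    {V : Type*} [Fintype V] (E : V → V → Prop) (k : V → ℕ)
    (hk : Function.Injective k) (u v : V) (Ba Bd Fd : Set V)
    (hd1 : Disjoint Ba Bd) (hd2 : Disjoint Ba Fd) (hd3 : Disjoint Bd Fd)
    (hi : ∀ x y, E x y → y ∈ Bd → x ∈ Ba ∪ Bd)
    (hii : ∀ x ∈ Fd, Relation.ReflTransGen E v x)
    (hiii : ∀ x y, Relation.ReflTransGen E v x → Relation.ReflTransGen E v y →
      y ∈ Fd → k x < k y → x ∈ Fd)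
    (hu : u ∈ Ba ∪ Bd) (hv : v ∉ Ba ∪ Bd)
    (hFd : Fd.Nonempty)
    (hmax : ∀ y ∈ Ba, k y < sSup (k '' Fd)) :
    ¬ Relation.ReflTransGen E v u := by
  -- max of k over Fd is attained
  have himg : (k '' Fd).Nonempty := hFd.image k
  have hbdd : BddAbove (k '' Fd) := (Set.toFinite _).bddAbove
  obtain ⟨w, hwFd, hwk⟩ := Nat.sSup_mem himg hbdd
  intro hpath
  -- by induction: every node reachable from v is outside Ba ∪ Bd
  suffices h : ∀ x, Relation.ReflTransGen E v x → x ∉ Ba ∪ Bd from h u hpath hu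
  intro x hx
  induction hx with
  | refl => exact hv
  | tail hxy hedge ih =>
    rename_i b c
    intro hc
    rcases hc with hc | hc
    · -- c ∈ Ba : then c ∈ Fd, contradiction
      have hc' : c ∈ Fd := hiii c w (hxy.tail hedge) (hii w hwFd) hwFd
        (by rw [hwk]; exact hmax c hc)
      exact hd2.ne_of_mem hc hc' rfl
    · exact ih (hi b c hedge hc)
end

section
/- Let G = (V, E) be an acyclic directed graph on a finite vertex set and let S ⊆ V. Then there exists an injective function k : V → ℕ such that (a) k(x) < k(y) for every edge (x, y) ∈ E, and (b) for all x, y ∈ V, if part(x) ≺* part(y) then k(x) < k(y). In other words, G admits a topological ordering consistent with the total order ≺* on the parts {V_{i,j}} induced by S. -/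
private lemma digit_lt' {m q1 q2 r1 r2 : ℕ} (hr1 : r1 < m) (h : q1 < q2) :
    q1 * m + r1 < q2 * m + r2 := by
  have : (q1 + 1) * m ≤ q2 * m := Nat.mul_le_mul_right m h
  nlinarith

private lemma digit_eq' {m q1 q2 r1 r2 : ℕ} (hr1 : r1 < m) (hr2 : r2 < m)
    (h : q1 * m + r1 = q2 * m + r2) : q1 = q2 ∧ r1 = r2 := by
  rcases Nat.lt_trichotomy q1 q2 with hq | hq | hq
  · exact absurd h (Nat.ne_of_lt (digit_lt' hr1 hq))
  · exact ⟨hq, by subst hq; omega⟩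
  · exact absurd h.symm (Nat.ne_of_lt (digit_lt' hr2 hq))

/-- An acyclic directed graph `G = (V, E)` on a finite vertex set admits a
topological ordering `k : V → ℕ` (injective, increasing along edges) that is consistent
with the total order `≺*` on the parts `{V_{i,j}}` induced by `S`: if
`part(x) ≺* part(y)` then `k(x) < k(y)`, where `part(x) = (|A_S(x)|, |D_S(x)|)` and
`(i, j) ≺* (i', j')` iff `i < i'`, or `i = i'` and `j > j'`. -/
theorem exists_topological_order_consistent_with_parts
    {V : Type*} [Fintype V] (E : V → V → Prop) (S : Set V)
    (hacyc : ¬ ∃ w z : V, E w z ∧ Relation.ReflTransGen E z w) :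
    ∃ k : V → ℕ, Function.Injective k ∧
      (∀ x y, E x y → k x < k y) ∧
      (∀ x y : V,
        (({a | Relation.ReflTransGen E a x} ∩ S).ncard <
            ({a | Relation.ReflTransGen E a y} ∩ S).ncard ∨
          (({a | Relation.ReflTransGen E a x} ∩ S).ncard =
              ({a | Relation.ReflTransGen E a y} ∩ S).ncard ∧
            ({b | Relation.ReflTransGen E y b} ∩ S).ncard <
              ({b | Relation.ReflTransGen E x b} ∩ S).ncard)) →
        k x < k y) := by
  classical
  set n := Fintype.card V with hn
  set m := n + 1 with hm
  set a : V → ℕ := fun x => ({a | Relation.ReflTransGen E a x} ∩ S).ncard with ha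
  set d : V → ℕ := fun x => ({b | Relation.ReflTransGen E x b} ∩ S).ncard with hd
  set t : V → ℕ := fun x => {a | Relation.ReflTransGen E a x}.ncard with ht
  set e : V → ℕ := fun x => ((Fintype.equivFin V) x : ℕ) with he
  set c : V → ℕ := fun x => n - d x with hc
  have hbound : ∀ s : Set V, s.ncard ≤ n := by
    intro s
    have h := Set.ncard_le_ncard (Set.subset_univ s) (Set.toFinite _)
    simpa [Set.ncard_univ, Nat.card_eq_fintype_card, hn] using h
  have han : ∀ x, a x ≤ n := fun x => hbound _
  have hdn : ∀ x, d x ≤ n := fun x => hbound _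
  have hcn : ∀ x, c x ≤ n := fun x => Nat.sub_le _ _
  have htn : ∀ x, t x ≤ n := fun x => hbound _
  have hem : ∀ x, e x < m := by
    intro x
    simp only [he]
    have := ((Fintype.equivFin V) x).isLt
    omega
  have hcm : ∀ x, c x < m := fun x => by have := hcn x; omega
  have htm : ∀ x, t x < m := fun x => by have := htn x; omega
  -- edge facts
  have haxy : ∀ x y, E x y → a x ≤ a y := by
    intro x y hxy
    apply Set.ncard_le_ncard _ (Set.toFinite _)
    exact Set.inter_subset_inter_left _ (fun z hz => Relation.ReflTransGen.tail hz hxy)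
  have hdxy : ∀ x y, E x y → d y ≤ d x := by
    intro x y hxy
    apply Set.ncard_le_ncard _ (Set.toFinite _)
    exact Set.inter_subset_inter_left _ (fun z hz => Relation.ReflTransGen.head hxy hz)
  have htxy : ∀ x y, E x y → t x < t y := by
    intro x y hxy
    apply Set.ncard_lt_ncard _ (Set.toFinite _)
    constructor
    · exact fun z hz => Relation.ReflTransGen.tail hz hxy
    · intro hsub
      have hy : y ∈ {a | Relation.ReflTransGen E a y} := Relation.ReflTransGen.refl
      exact hacyc ⟨x, y, hxy, hsub hy⟩
  refine ⟨fun x => ((a x * m + c x) * m + t x) * m + e x, ?_, ?_, ?_⟩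
  · -- injectivity
    intro x y hxy
    have h1 := digit_eq' (hem x) (hem y) hxy
    have : (Fintype.equivFin V) x = (Fintype.equivFin V) y := Fin.ext h1.2
    exact (Fintype.equivFin V).injective this
  · -- edges
    intro x y hxy
    apply digit_lt' (hem x)
    have h1 := haxy x y hxy
    have h2 := hdxy x y hxy
    have h3 := htxy x y hxy
    have hcxy : c x ≤ c y := by simp only [hc]; omega
    rcases Nat.lt_or_ge (a x) (a y) with h | h
    · exact digit_lt' (htm x) (digit_lt' (hcm x) h)
    · have hae : a x = a y := le_antisymm h1 h
      rcases Nat.lt_or_ge (c x) (c y) with h' | h'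
      · exact digit_lt' (htm x) (by rw [hae]; omega)
      · have hce : c x = c y := le_antisymm hcxy h'
        rw [hae, hce]; omega
  · -- parts
    intro x y hpart
    apply digit_lt' (hem x)
    apply digit_lt' (htm x)
    rcases hpart with h | ⟨hae, hdlt⟩
    · exact digit_lt' (hcm x) h
    · have hdd : d y < d x := hdlt
      have hclt : c x < c y := by
        simp only [hc]
        exact Nat.sub_lt_sub_left (lt_of_lt_of_le hdd (hdn x)) hdd
      rw [show a x = a y from hae]
      omega
end

section
/- Let G = (V, E) be a directed graph on a finite vertex set, S ⊆ V, and let k : V → ℕ be an injective function consistent with the total order ≺* on parts, i.e., for all x, y ∈ V, part(x) ≺* part(y) implies k(x) < k(y). If (u, v) ∈ E is an edge with k(v) < k(u), then part(u) = part(v), i.e., u and v belong to the same part V_{i,j}. -/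
/-- Let `k : V → ℕ` be injective and consistent with the total order `≺*` on
parts: `part(x) ≺* part(y)` implies `k(x) < k(y)`. If `(u, v)` is an edge with
`k(v) < k(u)`, then `part(u) = part(v)`, i.e. `u` and `v` belong to the same part
`V_{i,j}`. -/
theorem backward_edge_same_part
    {V : Type*} [Fintype V] (E : V → V → Prop) (S : Set V) (k : V → ℕ)
    (hk : Function.Injective k)
    (hcons : ∀ x y : V,
      (({a | Relation.ReflTransGen E a x} ∩ S).ncard <
          ({a | Relation.ReflTransGen E a y} ∩ S).ncard ∨
        (({a | Relation.ReflTransGen E a x} ∩ S).ncard =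
            ({a | Relation.ReflTransGen E a y} ∩ S).ncard ∧
          ({b | Relation.ReflTransGen E y b} ∩ S).ncard <
            ({b | Relation.ReflTransGen E x b} ∩ S).ncard)) →
      k x < k y)
    (u v : V) (hedge : E u v) (hlt : k v < k u) :
    (({a | Relation.ReflTransGen E a u} ∩ S).ncard,
      ({b | Relation.ReflTransGen E u b} ∩ S).ncard) =
    (({a | Relation.ReflTransGen E a v} ∩ S).ncard,
      ({b | Relation.ReflTransGen E v b} ∩ S).ncard) := by
  have hA : ({a | Relation.ReflTransGen E a u} ∩ S) ⊆
      ({a | Relation.ReflTransGen E a v} ∩ S) := by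
    rintro a ⟨ha, haS⟩
    exact ⟨ha.tail hedge, haS⟩
  have hD : ({b | Relation.ReflTransGen E v b} ∩ S) ⊆
      ({b | Relation.ReflTransGen E u b} ∩ S) := by
    rintro b ⟨hb, hbS⟩
    exact ⟨(Relation.ReflTransGen.single hedge).trans hb, hbS⟩
  have hAle : ({a | Relation.ReflTransGen E a u} ∩ S).ncard ≤
      ({a | Relation.ReflTransGen E a v} ∩ S).ncard :=
    Set.ncard_le_ncard hA (Set.toFinite _)
  have hDle : ({b | Relation.ReflTransGen E v b} ∩ S).ncard ≤
      ({b | Relation.ReflTransGen E u b} ∩ S).ncard :=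
    Set.ncard_le_ncard hD (Set.toFinite _)
  have hne : ¬ k u < k v := fun h => absurd (hlt.trans h) (lt_irrefl _)
  have hAeq : ({a | Relation.ReflTransGen E a u} ∩ S).ncard =
      ({a | Relation.ReflTransGen E a v} ∩ S).ncard := by
    rcases lt_or_eq_of_le hAle with h | h
    · exact absurd (hcons u v (Or.inl h)) hne
    · exact h
  have hDeq : ({b | Relation.ReflTransGen E u b} ∩ S).ncard =
      ({b | Relation.ReflTransGen E v b} ∩ S).ncard := by
    rcases lt_or_eq_of_le hDle with h | h
    · exact absurd (hcons u v (Or.inr ⟨hAeq, h⟩)) hne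
    · exact h.symm
  exact Prod.ext hAeq hDeq
end
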